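/- arXiv:1504.01237 — 6 statements merged into one kernel-verified Lean document; each statement's English description precedes it below -/
import Mathlib

section
/- Entropy production identity for the Leslie stretch stress (Section 2.4): Let d, e, a ∈ ℝⁿ with |d| = 1 and ⟨e,d⟩ = 0, let M ∈ ℝⁿˣⁿ with symmetric part D = (M+Mᵀ)/2 and antisymmetric part V = (M−Mᵀ)/2, let γ, μ_V, μ_D ∈ ℝ with γ ≠ 0, and set n := μ_V Vd + μ_D P_d Dd − γ e and S := ((μ_D+μ_V)/(2γ)) n⊗d + ((μ_D−μ_V)/(2γ)) d⊗n. Then S:M + ⟨e,a⟩ = (1/γ)( |a|² + ⟨n+a, μ_V Vd + μ_D P_d Dd − a⟩ ). In particular, if n = −a, then S:M + ⟨e,a⟩ = |a|²/γ. -/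
open scoped BigOperators
open Matrix

/-- Euclidean inner product on `Fin n → ℝ`. -/
def dotv {n : ℕ} (a b : Fin n → ℝ) : ℝ := ∑ i, a i * b i

/-- Frobenius product `A : B = Σᵢⱼ Aᵢⱼ Bᵢⱼ` of two matrices. -/
def frob {n : ℕ} (A B : Matrix (Fin n) (Fin n) ℝ) : ℝ := ∑ i, ∑ j, A i j * B i j

section StretchAux
variable {n : ℕ}

lemma dotv_comm (a b : Fin n → ℝ) : dotv a b = dotv b a := by
  simp [dotv, mul_comm]

lemma dotv_add_left (a b c : Fin n → ℝ) : dotv (a + b) c = dotv a c + dotv b c := by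
  simp [dotv, add_mul, Finset.sum_add_distrib]

lemma dotv_sub_left (a b c : Fin n → ℝ) : dotv (a - b) c = dotv a c - dotv b c := by
  simp [dotv, sub_mul, Finset.sum_sub_distrib]

lemma dotv_smul_left (r : ℝ) (a c : Fin n → ℝ) : dotv (r • a) c = r * dotv a c := by
  simp [dotv, Finset.mul_sum, mul_assoc]

lemma dotv_add_right (a b c : Fin n → ℝ) : dotv c (a + b) = dotv c a + dotv c b := by
  rw [dotv_comm, dotv_add_left, dotv_comm a c, dotv_comm b c]

lemma dotv_sub_right (a b c : Fin n → ℝ) : dotv c (a - b) = dotv c a - dotv c b := by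
  rw [dotv_comm, dotv_sub_left, dotv_comm a c, dotv_comm b c]

lemma dotv_smul_right (r : ℝ) (a c : Fin n → ℝ) : dotv c (r • a) = r * dotv c a := by
  rw [dotv_comm, dotv_smul_left, dotv_comm a c]

lemma dotv_zero_left (c : Fin n → ℝ) : dotv 0 c = 0 := by simp [dotv]

lemma frob_add_left (A B M : Matrix (Fin n) (Fin n) ℝ) :
    frob (A + B) M = frob A M + frob B M := by
  simp [frob, add_mul, Finset.sum_add_distrib]

lemma frob_smul_left (r : ℝ) (A M : Matrix (Fin n) (Fin n) ℝ) :
    frob (r • A) M = r * frob A M := by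
  simp [frob, Finset.mul_sum, mul_assoc]

lemma frob_vecMulVec (u v : Fin n → ℝ) (M : Matrix (Fin n) (Fin n) ℝ) :
    frob (Matrix.vecMulVec u v) M = dotv u (M.mulVec v) := by
  simp only [frob, dotv, Matrix.vecMulVec_apply, Matrix.mulVec, dotProduct, Finset.mul_sum]
  apply Finset.sum_congr rfl; intros; apply Finset.sum_congr rfl; intros; ring

lemma dotv_transpose (u v : Fin n → ℝ) (M : Matrix (Fin n) (Fin n) ℝ) :
    dotv u (Mᵀ.mulVec v) = dotv v (M.mulVec u) := by
  simp only [dotv, Matrix.mulVec, dotProduct, Finset.mul_sum, Matrix.transpose_apply]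
  rw [Finset.sum_comm]
  apply Finset.sum_congr rfl; intros; apply Finset.sum_congr rfl; intros; ring

end StretchAux

/-- Entropy production identity for the Leslie stretch stress: with
`n = μ_V Vd + μ_D P_d Dd − γe` and
`S = ((μ_D+μ_V)/2γ) n⊗d + ((μ_D−μ_V)/2γ) d⊗n`, one has
`S:M + ⟨e,a⟩ = (1/γ)(|a|² + ⟨n+a, μ_V Vd + μ_D P_d Dd − a⟩)`;
in particular `S:M + ⟨e,a⟩ = |a|²/γ` when `n = −a`. -/
theorem stretch_entropy_identity {n : ℕ}
    (d e a : Fin n → ℝ) (hd : dotv d d = 1) (hed : dotv e d = 0)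
    (M D V : Matrix (Fin n) (Fin n) ℝ)
    (hD : D = ((1:ℝ)/2) • (M + Mᵀ)) (hV : V = ((1:ℝ)/2) • (M - Mᵀ))
    (γ μV μD : ℝ) (hγ : γ ≠ 0)
    (Pd : (Fin n → ℝ) → (Fin n → ℝ)) (hPd : Pd = fun v => v - (dotv d v) • d)
    (nv : Fin n → ℝ)
    (hnv : nv = μV • V.mulVec d + μD • Pd (D.mulVec d) - γ • e)
    (S : Matrix (Fin n) (Fin n) ℝ)
    (hS : S = ((μD + μV)/(2*γ)) • Matrix.vecMulVec nv d
            + ((μD - μV)/(2*γ)) • Matrix.vecMulVec d nv) :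
    frob S M + dotv e a
      = (1/γ) * (dotv a a + dotv (nv + a) (μV • V.mulVec d + μD • Pd (D.mulVec d) - a))
    ∧ (nv = -a → frob S M + dotv e a = dotv a a / γ) := by
  have hVmul : V.mulVec d = ((1:ℝ)/2) • (M.mulVec d - Mᵀ.mulVec d) := by
    rw [hV, Matrix.smul_mulVec, Matrix.sub_mulVec]
  have hDmul : D.mulVec d = ((1:ℝ)/2) • (M.mulVec d + Mᵀ.mulVec d) := by
    rw [hD, Matrix.smul_mulVec, Matrix.add_mulVec]
  have hMtd : dotv d (Mᵀ.mulVec d) = dotv d (M.mulVec d) := dotv_transpose d d M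
  set X := dotv nv (M.mulVec d) with hX
  set Y := dotv nv (Mᵀ.mulVec d) with hY
  have hPdApp : Pd (D.mulVec d) = D.mulVec d - (dotv d (D.mulVec d)) • d := by rw [hPd]
  have hdPDd : dotv d (Pd (D.mulVec d)) = 0 := by
    rw [hPdApp, dotv_sub_right, dotv_smul_right, hd]; ring
  have hdVd : dotv d (V.mulVec d) = 0 := by
    rw [hVmul, dotv_smul_right, dotv_sub_right, hMtd]; ring
  have hnvd : dotv nv d = 0 := by
    rw [dotv_comm, hnv, dotv_sub_right, dotv_add_right, dotv_smul_right, dotv_smul_right,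
      dotv_smul_right, hdVd, hdPDd, dotv_comm d e, hed]; ring
  have hnvV : dotv nv (V.mulVec d) = (X - Y)/2 := by
    rw [hVmul, dotv_smul_right, dotv_sub_right, ← hX, ← hY]; ring
  have hnvD : dotv nv (D.mulVec d) = (X + Y)/2 := by
    rw [hDmul, dotv_smul_right, dotv_add_right, ← hX, ← hY]; ring
  have hnvPDd : dotv nv (Pd (D.mulVec d)) = (X + Y)/2 := by
    rw [hPdApp, dotv_sub_right, dotv_smul_right, hnvd, hnvD]; ring
  have hfrob : frob S M = (μD + μV)/(2*γ) * X + (μD - μV)/(2*γ) * Y := by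
    rw [hS, frob_add_left, frob_smul_left, frob_smul_left, frob_vecMulVec, frob_vecMulVec,
      show dotv d (M.mulVec nv) = Y from (dotv_transpose nv d M).symm]
  have he : γ • e = μV • V.mulVec d + μD • Pd (D.mulVec d) - nv := by rw [hnv]; abel
  have hea : γ * dotv e a
      = μV * dotv a (V.mulVec d) + μD * dotv a (Pd (D.mulVec d)) - dotv nv a := by
    have h := congrArg (fun v => dotv v a) he
    simp only [dotv_smul_left, dotv_add_left, dotv_sub_left] at h
    rw [h, dotv_comm a (V.mulVec d), dotv_comm a (Pd (D.mulVec d))]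
  have hea' : dotv e a
      = (μV * dotv a (V.mulVec d) + μD * dotv a (Pd (D.mulVec d)) - dotv nv a) / γ := by
    field_simp
    linarith [hea]
  have hRHS : dotv (nv + a) (μV • V.mulVec d + μD • Pd (D.mulVec d) - a)
      = μV * dotv nv (V.mulVec d) + μD * dotv nv (Pd (D.mulVec d)) - dotv nv a
        + (μV * dotv a (V.mulVec d) + μD * dotv a (Pd (D.mulVec d)) - dotv a a) := by
    simp only [dotv_add_left, dotv_sub_right, dotv_add_right, dotv_smul_right]
    ring
  have h1 : frob S M + dotv e a
      = (1/γ) * (dotv a a + dotv (nv + a) (μV • V.mulVec d + μD • Pd (D.mulVec d) - a)) := by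
    rw [hfrob, hea', hRHS, hnvV, hnvPDd]
    field_simp
    ring
  refine ⟨h1, fun hna => ?_⟩
  rw [h1, hna]
  simp only [neg_add_cancel, dotv_zero_left]
  ring
end

section
/- Refined dissipation inequality, incompressible case (Remark (i), Section 2.5): Let n ≥ 1, let D ∈ ℝⁿˣⁿ be symmetric with tr D = 0, let d ∈ ℝⁿ with |d| = 1, and let μ_s, μ_L, μ_0 ∈ ℝ satisfy μ_s ≥ 0, 2μ_s + μ_L ≥ 0 and 2μ_s + μ_0 ≥ 0. Then 2μ_s‖D‖² + μ_L|P_dDd|² + μ_0⟨Dd,d⟩² ≥ 0. -/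
open scoped BigOperators
open Matrix

/-- Refined dissipation inequality in the incompressible case: for symmetric trace-free `D`,
unit `d`, and `μ_s ≥ 0`, `2μ_s + μ_L ≥ 0`, `2μ_s + μ₀ ≥ 0`,
`2μ_s‖D‖² + μ_L|P_dDd|² + μ₀⟨Dd,d⟩² ≥ 0`. -/
theorem refined_dissipation_incompressible {n : ℕ} (hn : 1 ≤ n)
    (D : Matrix (Fin n) (Fin n) ℝ) (hDsymm : Dᵀ = D) (hDtr : Matrix.trace D = 0)
    (d : Fin n → ℝ) (hd : dotv d d = 1)
    (μs μL μ₀ : ℝ) (hμs : 0 ≤ μs) (hμL : 0 ≤ 2*μs + μL) (hμ₀ : 0 ≤ 2*μs + μ₀)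
    (Pd : (Fin n → ℝ) → (Fin n → ℝ)) (hPd : Pd = fun v => v - (dotv d v) • d) :
    0 ≤ 2*μs * frob D D
        + μL * dotv (Pd (D.mulVec d)) (Pd (D.mulVec d))
        + μ₀ * (dotv (D.mulVec d) d)^2 := by
  set a := D.mulVec d with ha
  set t := dotv d a with ht
  have htsym : dotv a d = t := by
    simp [dotv, t, mul_comm]
  -- expand |Pd a|²
  have hP : dotv (Pd a) (Pd a) = dotv a a - t^2 := by
    subst hPd
    simp only [dotv, Pi.sub_apply, Pi.smul_apply, smul_eq_mul]
    have expand : ∀ i : Fin n, (a i - t * d i) * (a i - t * d i)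
        = a i * a i - 2 * t * (d i * a i) + t^2 * (d i * d i) := by
      intro i; ring
    have hdt : (∑ i, d i * a i) = t := rfl
    rw [hdt, Finset.sum_congr rfl fun i _ => expand i]
    rw [Finset.sum_add_distrib, Finset.sum_sub_distrib, ← Finset.mul_sum, ← Finset.mul_sum]
    have : (∑ i, d i * a i) = t := rfl
    rw [this]
    have : (∑ i, d i * d i) = 1 := hd
    rw [this]
    ring
  -- |Pd a|² ≥ 0
  have hPnn : 0 ≤ dotv (Pd a) (Pd a) := by
    rw [hPd]
    exact Finset.sum_nonneg fun i _ => mul_self_nonneg _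
  -- Cauchy-Schwarz: |a|² ≤ ‖D‖²
  have hCS : dotv a a ≤ frob D D := by
    have row : ∀ i : Fin n, a i * a i ≤ ∑ j, D i j * D i j := by
      intro i
      have h1 : (∑ j, D i j * d j)^2 ≤ (∑ j, D i j ^ 2) * (∑ j, d j ^ 2) :=
        Finset.sum_mul_sq_le_sq_mul_sq Finset.univ (fun j => D i j) (fun j => d j)
      have h2 : (∑ j, d j ^ 2) = 1 := by
        rw [← hd]; simp [dotv, sq]
      have h3 : a i = ∑ j, D i j * d j := by
        simp [ha, Matrix.mulVec, dotProduct]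
      rw [h3]
      calc (∑ j, D i j * d j) * (∑ j, D i j * d j)
          = (∑ j, D i j * d j)^2 := by ring
        _ ≤ (∑ j, D i j ^ 2) * (∑ j, d j ^ 2) := h1
        _ = ∑ j, D i j * D i j := by rw [h2]; simp [sq]
    exact Finset.sum_le_sum fun i _ => row i
  have hta : dotv (D.mulVec d) d = t := htsym
  rw [hta, hP]
  nlinarith [mul_nonneg hμL hPnn, mul_nonneg hμ₀ (sq_nonneg t),
    mul_nonneg hμs (sub_nonneg.mpr hCS), hP, hPnn]
end

section
/- Refined dissipation inequality, compressible case (Remark (i), Section 2.5): Let n ≥ 1, let D ∈ ℝⁿˣⁿ be symmetric, let d ∈ ℝⁿ with |d| = 1, and let μ_s, μ_b, μ_L, μ_0 ∈ ℝ satisfy μ_s ≥ 0, 2μ_s + μ_L ≥ 0, 2μ_s + μ_0 > 0, and μ_0²/n² ≤ (2μ_s + μ_0)(2μ_s/n + μ_b + μ_0/n²). Then 2μ_s‖D‖² + μ_b(tr D)² + μ_L|P_dDd|² + μ_0⟨Dd,d⟩² ≥ 0. -/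
open scoped BigOperators
open Matrix

lemma dotv_nonneg' {n : ℕ} (x : Fin n → ℝ) : 0 ≤ dotv x x :=
  Finset.sum_nonneg fun i _ => mul_self_nonneg _

lemma dotv_expand' {n : ℕ} (x y : Fin n → ℝ) (c : ℝ) :
    dotv (fun i => x i - c * y i) (fun i => x i - c * y i)
      = dotv x x - 2*c*dotv x y + c^2 * dotv y y := by
  have h : ∀ i ∈ Finset.univ, (x i - c * y i) * (x i - c * y i)
      = x i * x i - 2*c*(x i * y i) + c^2*(y i * y i) := by intros; ring
  simp only [dotv]
  rw [Finset.sum_congr rfl h]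
  rw [Finset.sum_add_distrib, Finset.sum_sub_distrib, ← Finset.mul_sum, ← Finset.mul_sum]

lemma cs_row' {n : ℕ} (M : Matrix (Fin n) (Fin n) ℝ) (d : Fin n → ℝ) :
    dotv (M.mulVec d) (M.mulVec d) ≤ frob M M * dotv d d := by
  simp only [dotv, frob, Matrix.mulVec, dotProduct]
  rw [Finset.sum_mul]
  apply Finset.sum_le_sum
  intro i _
  calc (∑ j, M i j * d j) * (∑ j, M i j * d j) = (∑ j, M i j * d j)^2 := by ring
    _ ≤ (∑ j, (M i j)^2) * (∑ j, (d j)^2) := Finset.sum_mul_sq_le_sq_mul_sq Finset.univ _ _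
    _ = (∑ j, M i j * M i j) * (∑ j, d j * d j) := by simp [pow_two]

set_option maxHeartbeats 1000000 in
/-- Refined dissipation inequality in the compressible case: for symmetric `D`, unit `d`,
and `μ_s ≥ 0`, `2μ_s + μ_L ≥ 0`, `2μ_s + μ₀ > 0`,
`μ₀²/n² ≤ (2μ_s + μ₀)(2μ_s/n + μ_b + μ₀/n²)`, one has
`2μ_s‖D‖² + μ_b(tr D)² + μ_L|P_dDd|² + μ₀⟨Dd,d⟩² ≥ 0`. -/
theorem refined_dissipation_compressible {n : ℕ} (hn : 1 ≤ n)
    (D : Matrix (Fin n) (Fin n) ℝ) (hDsymm : Dᵀ = D)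
    (d : Fin n → ℝ) (hd : dotv d d = 1)
    (μs μb μL μ₀ : ℝ) (hμs : 0 ≤ μs) (hμL : 0 ≤ 2*μs + μL) (hμ₀ : 0 < 2*μs + μ₀)
    (hdisc : μ₀^2/(n:ℝ)^2 ≤ (2*μs + μ₀) * (2*μs/(n:ℝ) + μb + μ₀/(n:ℝ)^2))
    (Pd : (Fin n → ℝ) → (Fin n → ℝ)) (hPd : Pd = fun v => v - (dotv d v) • d) :
    0 ≤ 2*μs * frob D D + μb * (Matrix.trace D)^2
        + μL * dotv (Pd (D.mulVec d)) (Pd (D.mulVec d))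
        + μ₀ * (dotv (D.mulVec d) d)^2 := by
  set m : ℝ := (n : ℝ) with hm_def
  have hm : (0:ℝ) < m := by
    simp only [hm_def]
    exact_mod_cast Nat.lt_of_lt_of_le Nat.zero_lt_one hn
  set v : Fin n → ℝ := D.mulVec d with hv_def
  set F : ℝ := frob D D with hF_def
  set t : ℝ := Matrix.trace D with ht_def
  set a : ℝ := dotv v d with ha_def
  have hdva : dotv d v = a := by
    simp only [ha_def, dotv, mul_comm]
  -- the projected vector
  have hPdv : Pd v = fun i => v i - a * d i := by
    rw [hPd]
    funext i
    simp [hdva, mul_comm]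
  set w2 : ℝ := dotv (Pd v) (Pd v) with hw2_def
  have hw2 : w2 = dotv v v - a^2 := by
    rw [hw2_def, hPdv, dotv_expand' v d a, hd, ha_def]
    ring
  have hw2nn : 0 ≤ w2 := dotv_nonneg' _
  -- the trace-free part E of D
  set c : ℝ := t / m with hc_def
  set E : Matrix (Fin n) (Fin n) ℝ :=
    Matrix.of (fun i j => D i j - c * (if i = j then 1 else 0)) with hE_def
  have hEmul : E.mulVec d = fun i => v i - c * d i := by
    funext i
    simp only [hE_def, Matrix.mulVec, dotProduct, Matrix.of_apply, hv_def]
    have : ∀ j, (D i j - c * (if i = j then (1:ℝ) else 0)) * d j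
        = D i j * d j - c * ((if i = j then (1:ℝ) else 0) * d j) := by intro j; ring
    rw [Finset.sum_congr rfl fun j _ => this j, Finset.sum_sub_distrib, ← Finset.mul_sum]
    simp [Finset.sum_ite_eq, Matrix.mulVec, dotProduct]
  have htrace : t = ∑ i, D i i := by
    simp [ht_def, Matrix.trace, Matrix.diag]
  have hfrobE : frob E E = F - 2*c*t + c^2*m := by
    simp only [frob, hE_def, Matrix.of_apply]
    have h : ∀ i, ∀ j ∈ Finset.univ,
        (D i j - c * (if i = j then (1:ℝ) else 0)) * (D i j - c * (if i = j then 1 else 0))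
        = D i j * D i j - 2*c*(D i j * (if i = j then (1:ℝ) else 0))
            + c^2 * (if i = j then (1:ℝ) else 0) := by
      intro i j _; split <;> ring
    have hrow : ∀ i ∈ Finset.univ,
        (∑ j, (D i j - c * (if i = j then (1:ℝ) else 0)) * (D i j - c * (if i = j then 1 else 0)))
        = (∑ j, D i j * D i j) - 2*c*(D i i) + c^2 := by
      intro i _
      rw [Finset.sum_congr rfl (h i), Finset.sum_add_distrib, Finset.sum_sub_distrib,
        ← Finset.mul_sum]
      simp [Finset.sum_ite_eq, mul_ite]
    rw [Finset.sum_congr rfl hrow, Finset.sum_add_distrib, Finset.sum_sub_distrib,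
      ← Finset.mul_sum, ← htrace]
    simp only [Finset.sum_const, Finset.card_univ, Fintype.card_fin, nsmul_eq_mul]
    rw [hF_def, frob]
    ring
  have hdotE : dotv (E.mulVec d) (E.mulVec d) = dotv v v - 2*c*a + c^2 := by
    rw [hEmul, dotv_expand' v d c, hd, ha_def]
    ring
  have hcs := cs_row' E d
  rw [hd, mul_one, hdotE, hfrobE] at hcs
  -- hcs : dotv v v - 2*c*a + c^2 ≤ F - 2*c*t + c^2*m
  have hV : dotv v v = w2 + a^2 := by linarith
  rw [hV] at hcs
  have hc2 : c * m = t := by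
    rw [hc_def]; field_simp
  -- clear denominators in hcs : multiply by m^2 implicitly via c*m = t
  have hcs2 : m^2*(w2 + a^2) - 2*m*t*a + t^2 ≤ m^2*F - m*t^2 := by
    have h := mul_le_mul_of_nonneg_left hcs (le_of_lt (mul_pos hm hm))
    have hmne : m ≠ 0 := ne_of_gt hm
    have e1 : m * m * (w2 + a ^ 2 - 2 * c * a + c ^ 2) = m^2*(w2+a^2) - 2*m*t*a + t^2 := by
      rw [hc_def]; field_simp
    have e2 : m * m * (F - 2 * c * t + c ^ 2 * m) = m^2*F - m*t^2 := by
      rw [hc_def]; field_simp; ring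
    linarith [h, e1.symm.trans_le (e2 ▸ h)]
  -- clear denominators in the discriminant condition
  have hdisc2 : μ₀^2 ≤ (2*μs + μ₀) * (2*μs*m + μb*m^2 + μ₀) := by
    have hm2 : (0:ℝ) < m^2 := by positivity
    have h := (div_le_iff₀ hm2).mp hdisc
    calc μ₀^2 ≤ ((2*μs + μ₀) * (2*μs/m + μb + μ₀/m^2)) * m^2 := h
      _ = (2*μs + μ₀) * (2*μs*m + μb*m^2 + μ₀) := by field_simp
  clear_value m v F t a w2 c E
  have h3 : (m*a - t)^2 + m*t^2 + m^2*w2 ≤ m^2*F := by nlinarith [hcs2]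
  have h4 : 0 ≤ 2*μs*(m^2*F - ((m*a - t)^2 + m*t^2 + m^2*w2)) :=
    mul_nonneg (by linarith) (by linarith)
  have h5 : 0 ≤ (2*μs + μL)*(m^2*w2) :=
    mul_nonneg hμL (mul_nonneg (sq_nonneg m) hw2nn)
  have hquad : 0 ≤ (2*μs+μ₀)*(m*a-t)^2 + 2*μ₀*(m*a-t)*t + (2*μs*m + μb*m^2 + μ₀)*t^2 := by
    nlinarith [sq_nonneg ((2*μs+μ₀)*(m*a - t) + μ₀*t),
      mul_nonneg (sub_nonneg.mpr hdisc2) (sq_nonneg t), hμ₀]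
  have goalm : 0 ≤ m^2 * (2*μs*F + μb*t^2 + μL*w2 + μ₀*a^2) := by nlinarith [h4, h5, hquad]
  have hm2 : (0:ℝ) < m^2 := by positivity
  exact nonneg_of_mul_nonneg_right goalm hm2
end

section
/- Reduced angular equation in the proof of Lemma 1: Let U ⊆ ℝⁿ be open, let a : U → ℝ be continuously differentiable, let c₁, φ : U → ℝ be twice continuously differentiable, let w : U → ℝ be any function, and define d₁ := c₁ cos φ and d₂ := c₁ sin φ. If div(a∇d₁) + w d₁ = 0 and div(a∇d₂) + w d₂ = 0 on U, then c₁ div(a∇φ) + 2a ∇c₁·∇φ = 0 on U. -/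
open scoped BigOperators

/-- Partial derivative in the `i`-th coordinate direction of a scalar field on `ℝⁿ`. -/
noncomputable def pxs {n : ℕ} (i : Fin n) (f : (Fin n → ℝ) → ℝ) (x : Fin n → ℝ) : ℝ :=
  fderiv ℝ f x (Pi.single i 1)

/-- Divergence form operator `div(a∇f) = Σᵢ ∂ᵢ(a ∂ᵢ f)` acting on scalar fields. -/
noncomputable def divA {n : ℕ} (a f : (Fin n → ℝ) → ℝ) (x : Fin n → ℝ) : ℝ :=
  ∑ i, pxs i (fun y => a y * pxs i f y) x

section helpers

variable {n : ℕ} {i : Fin n} {f g φ : (Fin n → ℝ) → ℝ} {x : Fin n → ℝ}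

lemma pxs_congr (h : f =ᶠ[nhds x] g) : pxs i f x = pxs i g x := by
  unfold pxs; rw [h.fderiv_eq]

lemma pxs_add (hf : DifferentiableAt ℝ f x) (hg : DifferentiableAt ℝ g x) :
    pxs i (fun y => f y + g y) x = pxs i f x + pxs i g x := by
  simp [pxs, fderiv_fun_add hf hg]

lemma pxs_sub (hf : DifferentiableAt ℝ f x) (hg : DifferentiableAt ℝ g x) :
    pxs i (fun y => f y - g y) x = pxs i f x - pxs i g x := by
  simp [pxs, fderiv_fun_sub hf hg]

lemma pxs_mul (hf : DifferentiableAt ℝ f x) (hg : DifferentiableAt ℝ g x) :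
    pxs i (fun y => f y * g y) x = f x * pxs i g x + g x * pxs i f x := by
  simp [pxs, fderiv_fun_mul hf hg]

lemma pxs_sin (hφ : DifferentiableAt ℝ φ x) :
    pxs i (fun y => Real.sin (φ y)) x = Real.cos (φ x) * pxs i φ x := by
  have h : HasFDerivAt (fun y => Real.sin (φ y)) (Real.cos (φ x) • fderiv ℝ φ x) x :=
    (Real.hasDerivAt_sin (φ x)).comp_hasFDerivAt x hφ.hasFDerivAt
  simp [pxs, h.fderiv]

lemma pxs_cos (hφ : DifferentiableAt ℝ φ x) :
    pxs i (fun y => Real.cos (φ y)) x = -Real.sin (φ x) * pxs i φ x := by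
  have h : HasFDerivAt (fun y => Real.cos (φ y)) (-Real.sin (φ x) • fderiv ℝ φ x) x :=
    (Real.hasDerivAt_cos (φ x)).comp_hasFDerivAt x hφ.hasFDerivAt
  simp [pxs, h.fderiv]

lemma diffAt_sin_comp (hφ : DifferentiableAt ℝ φ x) :
    DifferentiableAt ℝ (fun y => Real.sin (φ y)) x :=
  Real.differentiable_sin.differentiableAt.comp x hφ

lemma diffAt_cos_comp (hφ : DifferentiableAt ℝ φ x) :
    DifferentiableAt ℝ (fun y => Real.cos (φ y)) x :=
  Real.differentiable_cos.differentiableAt.comp x hφ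

lemma diffAt_pxs {U : Set (Fin n → ℝ)} (hU : IsOpen U) (hf : ContDiffOn ℝ 2 f U)
    (hx : x ∈ U) : DifferentiableAt ℝ (pxs i f) x := by
  have h1 : ContDiffOn ℝ 1 (fun y => fderiv ℝ f y) U :=
    hf.fderiv_of_isOpen hU (by norm_num)
  have h2 : ContDiffOn ℝ 1 (pxs i f) U := by
    have := h1.clm_apply (contDiffOn_const (c := (Pi.single i 1 : Fin n → ℝ)))
    exact this
  exact ((h2.differentiableOn one_ne_zero) x hx).differentiableAt (hU.mem_nhds hx)

end helpers

section key

variable {n : ℕ} {U : Set (Fin n → ℝ)}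

lemma key_identity (hU : IsOpen U)
    {a c₁ φ : (Fin n → ℝ) → ℝ}
    (ha : ContDiffOn ℝ 1 a U) (hc₁ : ContDiffOn ℝ 2 c₁ U) (hφ : ContDiffOn ℝ 2 φ U)
    (i : Fin n) {x : Fin n → ℝ} (hx : x ∈ U) :
    Real.cos (φ x) * pxs i (fun y => a y * pxs i (fun z => c₁ z * Real.sin (φ z)) y) x
      - Real.sin (φ x) * pxs i (fun y => a y * pxs i (fun z => c₁ z * Real.cos (φ z)) y) x
    = c₁ x * pxs i (fun y => a y * pxs i φ y) x
      + 2 * a x * (pxs i c₁ x * pxs i φ x) := by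
  -- differentiability facts at points of U
  have da : ∀ y ∈ U, DifferentiableAt ℝ a y := fun y hy =>
    ((ha.differentiableOn one_ne_zero) y hy).differentiableAt (hU.mem_nhds hy)
  have dc : ∀ y ∈ U, DifferentiableAt ℝ c₁ y := fun y hy =>
    ((hc₁.differentiableOn (by norm_num)) y hy).differentiableAt (hU.mem_nhds hy)
  have dφ : ∀ y ∈ U, DifferentiableAt ℝ φ y := fun y hy =>
    ((hφ.differentiableOn (by norm_num)) y hy).differentiableAt (hU.mem_nhds hy)
  have dpc : ∀ y ∈ U, DifferentiableAt ℝ (pxs i c₁) y := fun y hy => diffAt_pxs hU hc₁ hy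
  have dpφ : ∀ y ∈ U, DifferentiableAt ℝ (pxs i φ) y := fun y hy => diffAt_pxs hU hφ hy
  set P : (Fin n → ℝ) → ℝ := fun y => a y * pxs i c₁ y with hP
  set R : (Fin n → ℝ) → ℝ := fun y => a y * pxs i φ y with hR
  set Q : (Fin n → ℝ) → ℝ := fun y => c₁ y * R y with hQ
  have dP : DifferentiableAt ℝ P x := (da x hx).mul (dpc x hx)
  have dR : DifferentiableAt ℝ R x := (da x hx).mul (dpφ x hx)
  have dQ : DifferentiableAt ℝ Q x := (dc x hx).mul dR
  have hmem : U ∈ nhds x := hU.mem_nhds hx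
  -- pointwise first-derivative expansion on U
  have e2 : (fun y => a y * pxs i (fun z => c₁ z * Real.sin (φ z)) y) =ᶠ[nhds x]
      (fun y => Real.sin (φ y) * P y + Real.cos (φ y) * Q y) := by
    filter_upwards [hmem] with y hy
    have h := pxs_mul (i := i) (dc y hy) (diffAt_sin_comp (dφ y hy))
    rw [h, pxs_sin (dφ y hy)]
    simp only [hP, hQ, hR]; ring
  have e1 : (fun y => a y * pxs i (fun z => c₁ z * Real.cos (φ z)) y) =ᶠ[nhds x]
      (fun y => Real.cos (φ y) * P y - Real.sin (φ y) * Q y) := by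
    filter_upwards [hmem] with y hy
    have h := pxs_mul (i := i) (dc y hy) (diffAt_cos_comp (dφ y hy))
    rw [h, pxs_cos (dφ y hy)]
    simp only [hP, hQ, hR]; ring
  rw [pxs_congr e2, pxs_congr e1]
  have dsin : DifferentiableAt ℝ (fun y => Real.sin (φ y)) x := diffAt_sin_comp (dφ x hx)
  have dcos : DifferentiableAt ℝ (fun y => Real.cos (φ y)) x := diffAt_cos_comp (dφ x hx)
  rw [pxs_add (dsin.fun_mul dP) (dcos.fun_mul dQ), pxs_sub (dcos.fun_mul dP) (dsin.fun_mul dQ),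
    pxs_mul dsin dP, pxs_mul dcos dQ, pxs_mul dcos dP, pxs_mul dsin dQ,
    pxs_sin (dφ x hx), pxs_cos (dφ x hx)]
  have hQ' : pxs i Q x = c₁ x * pxs i R x + R x * pxs i c₁ x := pxs_mul (dc x hx) dR
  rw [hQ']
  have hpyth := Real.sin_sq_add_cos_sq (φ x)
  simp only [hP, hQ, hR]
  linear_combination (c₁ x * pxs i (fun y => a y * pxs i φ y) x
    + 2 * a x * (pxs i c₁ x * pxs i φ x)) * hpyth

end key

/-- Reduced angular equation in the proof of Lemma 1: if `d₁ = c₁ cos φ` and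
`d₂ = c₁ sin φ` both satisfy `div(a∇dᵢ) + w dᵢ = 0` on the open set `U`, then
`c₁ div(a∇φ) + 2a ∇c₁·∇φ = 0` on `U`. -/
theorem reduced_angular_equation {n : ℕ}
    (U : Set (Fin n → ℝ)) (hU : IsOpen U)
    (a : (Fin n → ℝ) → ℝ) (ha : ContDiffOn ℝ 1 a U)
    (c₁ φ : (Fin n → ℝ) → ℝ)
    (hc₁ : ContDiffOn ℝ 2 c₁ U) (hφ : ContDiffOn ℝ 2 φ U)
    (w : (Fin n → ℝ) → ℝ)
    (h1 : ∀ x ∈ U, divA a (fun y => c₁ y * Real.cos (φ y)) x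
            + w x * (c₁ x * Real.cos (φ x)) = 0)
    (h2 : ∀ x ∈ U, divA a (fun y => c₁ y * Real.sin (φ y)) x
            + w x * (c₁ x * Real.sin (φ x)) = 0) :
    ∀ x ∈ U, c₁ x * divA a φ x + 2 * a x * ∑ i, pxs i c₁ x * pxs i φ x = 0 := by
  intro x hx
  have key : ∀ i : Fin n,
      Real.cos (φ x) * pxs i (fun y => a y * pxs i (fun z => c₁ z * Real.sin (φ z)) y) x
        - Real.sin (φ x) * pxs i (fun y => a y * pxs i (fun z => c₁ z * Real.cos (φ z)) y) x
      = c₁ x * pxs i (fun y => a y * pxs i φ y) x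
        + 2 * a x * (pxs i c₁ x * pxs i φ x) :=
    fun i => key_identity hU ha hc₁ hφ i hx
  have hsum := Finset.sum_congr rfl (fun i (_ : i ∈ Finset.univ) => key i)
  rw [Finset.sum_sub_distrib, ← Finset.mul_sum, ← Finset.mul_sum] at hsum
  rw [Finset.sum_add_distrib, ← Finset.mul_sum, ← Finset.mul_sum] at hsum
  have hd2 : divA a (fun y => c₁ y * Real.sin (φ y)) x = -(w x * (c₁ x * Real.sin (φ x))) := by
    linarith [h2 x hx]
  have hd1 : divA a (fun y => c₁ y * Real.cos (φ y)) x = -(w x * (c₁ x * Real.cos (φ x))) := by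
    linarith [h1 x hx]
  unfold divA at hd1 hd2
  rw [hd1, hd2] at hsum
  unfold divA
  linear_combination -hsum
end

section
/- Reduced radial equation in the proof of Lemma 1: Let U ⊆ ℝⁿ be open, let a : U → ℝ be continuously differentiable, let c₁, φ : U → ℝ be twice continuously differentiable, let w : U → ℝ be any function, and define d₁ := c₁ cos φ and d₂ := c₁ sin φ. If div(a∇d₁) + w d₁ = 0 and div(a∇d₂) + w d₂ = 0 on U, then div(a∇c₁) − a c₁|∇φ|² + w c₁ = 0 on U; equivalently, −div(a∇c₁) + a c₁|∇φ|² = w c₁. -/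
open scoped BigOperators

set_option maxHeartbeats 1000000 in
lemma key {n : ℕ} (U : Set (Fin n → ℝ)) (hU : IsOpen U)
    (a c₁ φ : (Fin n → ℝ) → ℝ)
    (ha : ContDiffOn ℝ 1 a U) (hc₁ : ContDiffOn ℝ 2 c₁ U) (hφ : ContDiffOn ℝ 2 φ U)
    (x : Fin n → ℝ) (hx : x ∈ U) (i : Fin n) :
    Real.cos (φ x) * pxs i (fun y => a y * pxs i (fun y => c₁ y * Real.cos (φ y)) y) x
    + Real.sin (φ x) * pxs i (fun y => a y * pxs i (fun y => c₁ y * Real.sin (φ y)) y) x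
    = pxs i (fun y => a y * pxs i c₁ y) x - a x * c₁ x * (pxs i φ x)^2 := by
  set e : Fin n → ℝ := Pi.single i 1 with he
  have hUx : U ∈ nhds x := hU.mem_nhds hx
  -- HasFDerivAt facts on U
  have hC : ∀ y ∈ U, HasFDerivAt c₁ (fderiv ℝ c₁ y) y := fun y hy =>
    ((hc₁.contDiffAt (hU.mem_nhds hy)).differentiableAt (by norm_num)).hasFDerivAt
  have hP : ∀ y ∈ U, HasFDerivAt φ (fderiv ℝ φ y) y := fun y hy =>
    ((hφ.contDiffAt (hU.mem_nhds hy)).differentiableAt (by norm_num)).hasFDerivAt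
  -- pointwise formula for pxs of d₁ and d₂ on U
  have e1 : ∀ y ∈ U, pxs i (fun z => c₁ z * Real.cos (φ z)) y
      = c₁ y * (-Real.sin (φ y) * (fderiv ℝ φ y e)) + Real.cos (φ y) * (fderiv ℝ c₁ y e) := by
    intro y hy
    have h := (hC y hy).mul ((hP y hy).cos)
    rw [pxs, HasFDerivAt.fderiv (f := fun z => c₁ z * Real.cos (φ z)) h]
    simp [ContinuousLinearMap.add_apply, ContinuousLinearMap.smul_apply, smul_eq_mul, he]
  have e2 : ∀ y ∈ U, pxs i (fun z => c₁ z * Real.sin (φ z)) y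
      = c₁ y * (Real.cos (φ y) * (fderiv ℝ φ y e)) + Real.sin (φ y) * (fderiv ℝ c₁ y e) := by
    intro y hy
    have h := (hC y hy).mul ((hP y hy).sin)
    rw [pxs, HasFDerivAt.fderiv (f := fun z => c₁ z * Real.sin (φ z)) h]
    simp [ContinuousLinearMap.add_apply, ContinuousLinearMap.smul_apply, smul_eq_mul, he]
  -- differentiability at x of the gradient components
  have hgc : HasFDerivAt (fun y => fderiv ℝ c₁ y e)
      (fderiv ℝ (fun y => fderiv ℝ c₁ y e) x) x := by
    have : ContDiffAt ℝ 1 (fun y => fderiv ℝ c₁ y e) x :=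
      ((hc₁.contDiffAt hUx).fderiv_right (by norm_num)).clm_apply contDiffAt_const
    exact (this.differentiableAt one_ne_zero).hasFDerivAt
  have hgp : HasFDerivAt (fun y => fderiv ℝ φ y e)
      (fderiv ℝ (fun y => fderiv ℝ φ y e) x) x := by
    have : ContDiffAt ℝ 1 (fun y => fderiv ℝ φ y e) x :=
      ((hφ.contDiffAt hUx).fderiv_right (by norm_num)).clm_apply contDiffAt_const
    exact (this.differentiableAt one_ne_zero).hasFDerivAt
  have hA : HasFDerivAt a (fderiv ℝ a x) x :=
    ((ha.contDiffAt hUx).differentiableAt one_ne_zero).hasFDerivAt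
  have hCx := hC x hx
  have hPx := hP x hx
  -- abbreviations for scalar values at x
  set A' := fderiv ℝ a x e with hA'
  set C' := fderiv ℝ c₁ x e with hC'
  set P' := fderiv ℝ φ x e with hP'
  set G' := fderiv ℝ (fun y => fderiv ℝ c₁ y e) x e with hG'
  set H' := fderiv ℝ (fun y => fderiv ℝ φ y e) x e with hH'
  -- compute pxs i (a * pxs i c₁) x
  have key0 : pxs i (fun y => a y * pxs i c₁ y) x = A' * C' + a x * G' := by
    have h := hA.mul hgc
    have : (fun y => a y * pxs i c₁ y) = fun y => a y * fderiv ℝ c₁ y e := by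
      funext y; rw [pxs]
    rw [this, pxs, HasFDerivAt.fderiv (f := fun y => a y * fderiv ℝ c₁ y e) h]
    simp [smul_eq_mul]
    ring
  -- compute pxs i (a * pxs i d₁) x via eventual equality
  have key1 : pxs i (fun y => a y * pxs i (fun z => c₁ z * Real.cos (φ z)) y) x
      = A' * (c₁ x * (-Real.sin (φ x) * P') + Real.cos (φ x) * C')
        + a x * ( (C' * (-Real.sin (φ x) * P') + c₁ x * ((-Real.cos (φ x) * P') * P' + -Real.sin (φ x) * H'))
          + ((-Real.sin (φ x) * P') * C' + Real.cos (φ x) * G') ) := by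
    have hev : (fun y => a y * pxs i (fun z => c₁ z * Real.cos (φ z)) y)
        =ᶠ[nhds x] (fun y => a y * (c₁ y * (-Real.sin (φ y) * (fderiv ℝ φ y e)) + Real.cos (φ y) * (fderiv ℝ c₁ y e))) := by
      filter_upwards [hUx] with y hy
      rw [e1 y hy]
    rw [pxs, hev.fderiv_eq]
    -- derivative of the RHS function
    have hinner1 : HasFDerivAt (fun y => -Real.sin (φ y) * (fderiv ℝ φ y e))
        ((-Real.sin (φ x)) • (fderiv ℝ (fun y => fderiv ℝ φ y e) x) + P' • (-(Real.cos (φ x) • fderiv ℝ φ x))) x :=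
      (hPx.sin.neg).mul hgp
    have h1 : HasFDerivAt (fun y => c₁ y * (-Real.sin (φ y) * (fderiv ℝ φ y e)))
        (c₁ x • ((-Real.sin (φ x)) • (fderiv ℝ (fun y => fderiv ℝ φ y e) x) + P' • (-(Real.cos (φ x) • fderiv ℝ φ x)))
          + (-Real.sin (φ x) * P') • fderiv ℝ c₁ x) x := hCx.mul hinner1
    have h2 : HasFDerivAt (fun y => Real.cos (φ y) * (fderiv ℝ c₁ y e))
        (Real.cos (φ x) • (fderiv ℝ (fun y => fderiv ℝ c₁ y e) x) + C' • (-Real.sin (φ x) • fderiv ℝ φ x)) x :=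
      hPx.cos.mul hgc
    have h3 := hA.mul (h1.add h2)
    rw [HasFDerivAt.fderiv (f := fun y => a y * (c₁ y * (-Real.sin (φ y) * (fderiv ℝ φ y e)) + Real.cos (φ y) * (fderiv ℝ c₁ y e))) h3]
    simp only [ContinuousLinearMap.add_apply, ContinuousLinearMap.smul_apply,
      ContinuousLinearMap.neg_apply, smul_eq_mul, Pi.add_apply]
    ring
  have key2 : pxs i (fun y => a y * pxs i (fun z => c₁ z * Real.sin (φ z)) y) x
      = A' * (c₁ x * (Real.cos (φ x) * P') + Real.sin (φ x) * C')
        + a x * ( (C' * (Real.cos (φ x) * P') + c₁ x * ((-Real.sin (φ x) * P') * P' + Real.cos (φ x) * H'))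
          + ((Real.cos (φ x) * P') * C' + Real.sin (φ x) * G') ) := by
    have hev : (fun y => a y * pxs i (fun z => c₁ z * Real.sin (φ z)) y)
        =ᶠ[nhds x] (fun y => a y * (c₁ y * (Real.cos (φ y) * (fderiv ℝ φ y e)) + Real.sin (φ y) * (fderiv ℝ c₁ y e))) := by
      filter_upwards [hUx] with y hy
      rw [e2 y hy]
    rw [pxs, hev.fderiv_eq]
    have hinner1 : HasFDerivAt (fun y => Real.cos (φ y) * (fderiv ℝ φ y e))
        (Real.cos (φ x) • (fderiv ℝ (fun y => fderiv ℝ φ y e) x) + P' • (-Real.sin (φ x) • fderiv ℝ φ x)) x :=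
      (hPx.cos).mul hgp
    have h1 : HasFDerivAt (fun y => c₁ y * (Real.cos (φ y) * (fderiv ℝ φ y e)))
        (c₁ x • (Real.cos (φ x) • (fderiv ℝ (fun y => fderiv ℝ φ y e) x) + P' • (-Real.sin (φ x) • fderiv ℝ φ x))
          + (Real.cos (φ x) * P') • fderiv ℝ c₁ x) x := hCx.mul hinner1
    have h2 : HasFDerivAt (fun y => Real.sin (φ y) * (fderiv ℝ c₁ y e))
        (Real.sin (φ x) • (fderiv ℝ (fun y => fderiv ℝ c₁ y e) x) + C' • (Real.cos (φ x) • fderiv ℝ φ x)) x :=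
      hPx.sin.mul hgc
    have h3 := hA.mul (h1.add h2)
    rw [HasFDerivAt.fderiv (f := fun y => a y * (c₁ y * (Real.cos (φ y) * (fderiv ℝ φ y e)) + Real.sin (φ y) * (fderiv ℝ c₁ y e))) h3]
    simp only [ContinuousLinearMap.add_apply, ContinuousLinearMap.smul_apply,
      ContinuousLinearMap.neg_apply, smul_eq_mul, Pi.add_apply]
    ring
  rw [key0, key1, key2]
  have hpx : pxs i φ x = P' := by rw [pxs]
  rw [hpx]
  linear_combination (A' * C' + a x * G' - a x * c₁ x * P'^2) * Real.sin_sq_add_cos_sq (φ x)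

/-- Reduced radial equation in the proof of Lemma 1: if `d₁ = c₁ cos φ` and
`d₂ = c₁ sin φ` both satisfy `div(a∇dᵢ) + w dᵢ = 0` on the open set `U`, then
`div(a∇c₁) − a c₁|∇φ|² + w c₁ = 0` on `U`, equivalently
`−div(a∇c₁) + a c₁|∇φ|² = w c₁`. -/
theorem reduced_radial_equation {n : ℕ}
    (U : Set (Fin n → ℝ)) (hU : IsOpen U)
    (a : (Fin n → ℝ) → ℝ) (ha : ContDiffOn ℝ 1 a U)
    (c₁ φ : (Fin n → ℝ) → ℝ)
    (hc₁ : ContDiffOn ℝ 2 c₁ U) (hφ : ContDiffOn ℝ 2 φ U)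
    (w : (Fin n → ℝ) → ℝ)
    (h1 : ∀ x ∈ U, divA a (fun y => c₁ y * Real.cos (φ y)) x
            + w x * (c₁ x * Real.cos (φ x)) = 0)
    (h2 : ∀ x ∈ U, divA a (fun y => c₁ y * Real.sin (φ y)) x
            + w x * (c₁ x * Real.sin (φ x)) = 0) :
    ∀ x ∈ U,
      divA a c₁ x - a x * c₁ x * ∑ i, (pxs i φ x)^2 + w x * c₁ x = 0
      ∧ -divA a c₁ x + a x * c₁ x * ∑ i, (pxs i φ x)^2 = w x * c₁ x := by
  intro x hx
  have hkey : Real.cos (φ x) * divA a (fun y => c₁ y * Real.cos (φ y)) x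
      + Real.sin (φ x) * divA a (fun y => c₁ y * Real.sin (φ y)) x
      = divA a c₁ x - a x * c₁ x * ∑ i, (pxs i φ x)^2 := by
    unfold divA
    rw [Finset.mul_sum, Finset.mul_sum, ← Finset.sum_add_distrib, Finset.mul_sum,
      ← Finset.sum_sub_distrib]
    exact Finset.sum_congr rfl fun i _ => key U hU a c₁ φ ha hc₁ hφ x hx i
  have E1 := h1 x hx
  have E2 := h2 x hx
  have main : divA a c₁ x - a x * c₁ x * ∑ i, (pxs i φ x)^2 + w x * c₁ x = 0 := by
    linear_combination Real.cos (φ x) * E1 + Real.sin (φ x) * E2 - hkey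
      - w x * c₁ x * Real.sin_sq_add_cos_sq (φ x)
  exact ⟨main, by linarith⟩
end

section
/- Normal ellipticity of the reduced principal symbol (proof of Theorem 2, step a): Let p, q, m, γ, b₀, b₁ ∈ ℝ with γ > 0, q > 0, m ≥ 0, b₀b₁ ≥ 0 and p > γ b₀ b₁ m. Then every complex root z of the characteristic polynomial det(z I − A) of the matrix A := [[p, −i b₀ q], [i b₁ m, q/γ]] ∈ ℂ^{2×2} is real and strictly positive; equivalently, the two zeros of z ↦ det(z + A) are real and negative. -/
open Matrix Complex

lemma charpoly_eval_fin_two (A : Matrix (Fin 2) (Fin 2) ℂ) (z : ℂ) :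
    A.charpoly.eval z = (z - A 0 0) * (z - A 1 1) - A 0 1 * A 1 0 := by
  rw [Matrix.charpoly, Matrix.det_fin_two, Matrix.charmatrix_apply_eq,
    Matrix.charmatrix_apply_eq, Matrix.charmatrix_apply_ne _ _ _ (by decide : (0 : Fin 2) ≠ 1),
    Matrix.charmatrix_apply_ne _ _ _ (by decide : (1 : Fin 2) ≠ 0)]
  simp

/-- Normal ellipticity of the reduced principal symbol: for real `p, q, m, γ, b₀, b₁` with
`γ > 0`, `q > 0`, `m ≥ 0`, `b₀b₁ ≥ 0` and `p > γb₀b₁m`, every complex root `z` of the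
characteristic polynomial `det(zI − A)` of
`A = [[p, −i b₀ q], [i b₁ m, q/γ]]` is real and strictly positive. -/
theorem reduced_symbol_normally_elliptic
    (p q m γ b₀ b₁ : ℝ)
    (hγ : 0 < γ) (hq : 0 < q) (hm : 0 ≤ m) (hb : 0 ≤ b₀ * b₁)
    (hp : γ * b₀ * b₁ * m < p) :
    ∀ z : ℂ,
      (Matrix.charpoly
        (!![(p : ℂ), -Complex.I * (b₀ : ℂ) * (q : ℂ);
            Complex.I * (b₁ : ℂ) * (m : ℂ), (q : ℂ) / (γ : ℂ)])).IsRoot z →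
      z.im = 0 ∧ 0 < z.re := by
  intro z hz
  have hp0 : 0 < p := by nlinarith [mul_nonneg (mul_nonneg hγ.le hb) hm]
  obtain ⟨r, hr, hqr⟩ : ∃ r : ℝ, 0 < r ∧ q = r * γ :=
    ⟨q / γ, by positivity, by field_simp⟩
  set T : ℝ := p + r with hT
  set D : ℝ := p * r - b₀ * b₁ * q * m with hD
  clear_value T D
  have hTpos : 0 < T := by rw [hT]; positivity
  have hDpos : 0 < D := by
    rw [hD, hqr]
    nlinarith [mul_pos (sub_pos.mpr hp) hr]
  have hdisc : 4 * D ≤ T ^ 2 := by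
    rw [hT, hD]
    nlinarith [sq_nonneg (p - r), mul_nonneg hb (mul_nonneg hq.le hm)]
  have hz' : z ^ 2 - (T : ℂ) * z + (D : ℂ) = 0 := by
    have h := hz
    rw [Polynomial.IsRoot, charpoly_eval_fin_two] at h
    simp only [Matrix.cons_val', Matrix.cons_val_zero, Matrix.cons_val_one, Matrix.head_cons,
      Matrix.empty_val', Matrix.cons_val_fin_one, Matrix.head_fin_const, Matrix.of_apply] at h
    have hqc : (q : ℂ) = (r : ℂ) * (γ : ℂ) := by push_cast [hqr]; ring
    have hγne : (γ : ℂ) ≠ 0 := by exact_mod_cast hγ.ne'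
    have hI : (Complex.I : ℂ) ^ 2 = -1 := Complex.I_sq
    rw [hT, hD]
    push_cast
    rw [hqc] at h ⊢
    field_simp at h
    linear_combination h - ((b₀ : ℂ) * b₁ * (r * γ) * m) * hI
  set x : ℝ := z.re with hx
  set y : ℝ := z.im with hy'
  have hre : x ^ 2 - y ^ 2 - T * x + D = 0 := by
    have := congrArg Complex.re hz'
    simpa [pow_two, Complex.mul_re, Complex.mul_im] using this
  have him : 2 * x * y - T * y = 0 := by
    have := congrArg Complex.im hz'
    simp [pow_two, Complex.mul_re, Complex.mul_im] at this
    linarith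
  have hy : y = 0 := by
    by_contra hy
    have h2x : 2 * x = T := by
      have h0 : y * (2 * x - T) = 0 := by linarith [him, mul_comm y (2 * x - T)]; 
      rcases mul_eq_zero.mp (by linarith [him] : y * (2 * x - T) = 0) with h | h
      · exact absurd h hy
      · linarith
    have hysq : 0 < y ^ 2 := pow_two_pos_of_ne_zero hy
    nlinarith
  refine ⟨hy, ?_⟩
  rw [hy] at hre
  by_contra hx0
  push_neg at hx0
  nlinarith [mul_nonneg hTpos.le (neg_nonneg.mpr hx0)]
end
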